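/- Let (S,P) be a set with walls. (1) For x₁,x₂,x₃ ∈ X̂, the majority-vote assignment μ(x₁,x₂,x₃)(h) := the halfspace of h chosen by at least two of x₁(h), x₂(h), x₃(h) is again an ultrafilter, and μ makes X̂ a median algebra: μ is invariant under all permutations of its three arguments, μ(a,a,b) = a, and μ(a,b,μ(c,d,e)) = μ(μ(a,b,c),μ(a,b,d),e) for all a,b,c,d,e ∈ X̂. (2) If C is a dualisable system for (S,P), then X_C is median-convex: for all x₁,x₂ ∈ X_C and z ∈ X̂, μ(x₁,x₂,z) ∈ X_C. -/
import Mathlib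


open Set

namespace WallDuality

variable {S : Type*}

/-- A wall on `S`, recorded as the unordered pair of its two complementary halfspaces. -/
def IsWall (h : Set (Set S)) : Prop := ∃ A : Set S, h = {A, Aᶜ}

/-- A set with walls: every element of `P` is a wall on `S`. -/
def IsWallSystem (P : Set (Set (Set S))) : Prop := ∀ h ∈ P, IsWall h

variable (P : Set (Set (Set S)))

/-- An ultrafilter on `P`: a consistent choice of a halfspace of each wall of `P`. -/
def IsUltra (x : ↥P → Set S) : Prop :=
  (∀ w : ↥P, x w ∈ w.1) ∧
    ∀ (w₁ w₂ : ↥P) (A B : Set S), A ∈ w₁.1 → B ∈ w₂.1 → A ⊆ B → x w₁ = A → x w₂ = B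

/-- The set `X̂` of all ultrafilters on `P`. -/
def hatX : Set (↥P → Set S) := {x | IsUltra P x}

/-- The principal ultrafilter of a point `s`: each wall is oriented towards `s`. -/
def principalUF (s : S) : ↥P → Set S := fun w => ⋃₀ {A | A ∈ w.1 ∧ s ∈ A}

/-- The pseudodistance associated with a collection `C` of subsets of `P`:
the supremum of the cardinalities of members of `C` all of whose walls separate
the two orientations. -/
noncomputable def wallDist (C : Set (Set ↥P)) (x y : ↥P → Set S) : ℕ∞ :=
  ⨆ c ∈ {c | c ∈ C ∧ ∀ w ∈ c, x w ≠ y w}, c.encard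

/-- A dualisable system on `(S, P)`. -/
structure IsDualisable (C : Set (Set ↥P)) : Prop where
  singleton_mem : ∀ w : ↥P, ({w} : Set ↥P) ∈ C
  subset_mem : ∀ c ∈ C, ∀ c' ⊆ c, c' ∈ C
  bounded : ∀ s t : S, ∃ M : ℕ, ∀ c ∈ C,
    (∀ w ∈ c, principalUF P s w ≠ principalUF P t w) → c.encard ≤ (M : ℕ∞)

/-- The dual space `X_C`: ultrafilters at finite distance from all principal ones. -/
def dualSpace (C : Set (Set ↥P)) : Set (↥P → Set S) :=
  {x | IsUltra P x ∧ ∀ s : S, wallDist P C x (principalUF P s) ≠ ⊤}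

/-- The majority-vote median of three orientations. -/
def medianUF (x y z : ↥P → Set S) : ↥P → Set S :=
  fun w => x w ∩ y w ∪ x w ∩ z w ∪ y w ∩ z w

/-- A `P`-convex subset of `X̂`: an intersection of halfspaces. -/
def IsPConvex (C' : Set (↥P → Set S)) : Prop :=
  ∃ (Q : Set ↥P) (σ : ↥P → Set S), (∀ w ∈ Q, σ w ∈ w.1) ∧
    C' = {v | IsUltra P v ∧ ∀ w ∈ Q, v w = σ w}

open scoped Classical in
/-- The gate of `z` to a set `C'` of orientations: reverse the orientation of exactly
those walls that separate `z` from `C'`. -/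
noncomputable def gateUF (C' : Set (↥P → Set S)) (z : ↥P → Set S) : ↥P → Set S :=
  fun w => if ∃ v ∈ C', v w = z w then z w else (z w)ᶜ

/-- `A` is gated in `Y` (with respect to the majority-vote median). -/
def IsGatedIn (Y A : Set (↥P → Set S)) : Prop :=
  ∀ x ∈ Y, ∃! g, g ∈ A ∧ ∀ a ∈ A, medianUF P a g x = g

/-- `σ` is a nested choice of halfspaces witnessing that `c` is a chain. -/
def IsChainOrder (σ : ↥P → Set S) (c : Set ↥P) : Prop :=
  (∀ w ∈ c, σ w ∈ w.1) ∧ ∀ w₁ ∈ c, ∀ w₂ ∈ c, σ w₁ ⊆ σ w₂ ∨ σ w₂ ⊆ σ w₁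

/-- A chain of walls. -/
def IsWallChain (c : Set ↥P) : Prop := ∃ σ, IsChainOrder P σ c

/-- A system of chains: a dualisable system all of whose members are chains. -/
def IsChainSystem (C : Set (Set ↥P)) : Prop :=
  IsDualisable P C ∧ ∀ c ∈ C, IsWallChain P c

/-- `C` is `m`-gluable: two members of `C`, one entirely preceding the other and with
union a chain, can be glued after removing at most `m` consecutive walls taken from
the last `m` walls of the first and the first `m` walls of the second. -/
def IsGluable (C : Set (Set ↥P)) (m : ℕ) : Prop :=
  ∀ c₁ ∈ C, ∀ c₂ ∈ C, ∀ σ : ↥P → Set S,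
    IsChainOrder P σ (c₁ ∪ c₂) → Disjoint c₁ c₂ →
    (∀ w₁ ∈ c₁, ∀ w₂ ∈ c₂, σ w₁ ⊆ σ w₂) →
    ∃ b ⊆ c₁ ∪ c₂,
      b.encard ≤ (m : ℕ∞) ∧
      (∀ w ∈ b ∩ c₁, {w' | w' ∈ c₁ ∧ σ w ⊂ σ w'}.encard < (m : ℕ∞)) ∧
      (∀ w ∈ b ∩ c₂, {w' | w' ∈ c₂ ∧ σ w' ⊂ σ w}.encard < (m : ℕ∞)) ∧
      (∀ w₁ ∈ b, ∀ w₂ ∈ b, ∀ w ∈ c₁ ∪ c₂, σ w₁ ⊆ σ w → σ w ⊆ σ w₂ → w ∈ b) ∧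
      (c₁ ∪ c₂) \ b ∈ C

/-- The ball of radius `r` about `x` in `X_C`. -/
def ballX (C : Set (Set ↥P)) (x : ↥P → Set S) (r : ℕ∞) : Set (↥P → Set S) :=
  {z | z ∈ dualSpace P C ∧ wallDist P C x z ≤ r}

/-- The normal wall path: the gate of `y` to the ball of radius `r` about `x`. -/
noncomputable def nwp (C : Set (Set ↥P)) (x y : ↥P → Set S) (r : ℕ) : ↥P → Set S :=
  gateUF P (ballX P C x (r : ℕ∞)) y

/-- Two walls cross: all four quarterspaces are nonempty. -/
def Crosses (w₁ w₂ : ↥P) : Prop := ∀ A ∈ w₁.1, ∀ B ∈ w₂.1, (A ∩ B).Nonempty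

/-- `C` is `L`-separated. -/
def IsSeparated (C : Set (Set ↥P)) (L : ℕ) : Prop :=
  ∀ w₁ w₂ : ↥P, w₁ ≠ w₂ → ({w₁, w₂} : Set ↥P) ∈ C →
    ∀ c ∈ C, (∀ w ∈ c, Crosses P w w₁ ∧ Crosses P w w₂) → c.encard ≤ (L : ℕ∞)

end WallDuality

namespace WallDuality

section Aux

variable {S : Type*} {P : Set (Set (Set S))}

lemma aux_two_agree (hP : IsWallSystem P) (w : ↥P) {a b c : Set S}
    (ha : a ∈ w.1) (hb : b ∈ w.1) (hc : c ∈ w.1) :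
    a = b ∨ a = c ∨ b = c := by
  obtain ⟨A, hA⟩ := hP w.1 w.2
  rw [hA] at ha hb hc
  simp only [Set.mem_insert_iff, Set.mem_singleton_iff] at ha hb hc
  rcases ha with rfl | rfl <;> rcases hb with rfl | rfl <;> rcases hc with h | h <;> tauto

lemma aux_med_ab {a b c : Set S} (h : a = b) : a ∩ b ∪ a ∩ c ∪ b ∩ c = a := by
  subst h; ext t; simp only [Set.mem_union, Set.mem_inter_iff]; tauto

lemma aux_med_ac {a b c : Set S} (h : a = c) : a ∩ b ∪ a ∩ c ∪ b ∩ c = a := by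
  subst h; ext t; simp only [Set.mem_union, Set.mem_inter_iff]; tauto

lemma aux_med_bc {a b c : Set S} (h : b = c) : a ∩ b ∪ a ∩ c ∪ b ∩ c = b := by
  subst h; ext t; simp only [Set.mem_union, Set.mem_inter_iff]; tauto

lemma aux_median_agree (hP : IsWallSystem P) {x y z : ↥P → Set S}
    (hx : ∀ w, x w ∈ w.1) (hy : ∀ w, y w ∈ w.1) (hz : ∀ w, z w ∈ w.1) (w : ↥P) :
    (medianUF P x y z w = x w ∧ medianUF P x y z w = y w) ∨
    (medianUF P x y z w = x w ∧ medianUF P x y z w = z w) ∨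
    (medianUF P x y z w = y w ∧ medianUF P x y z w = z w) := by
  rcases aux_two_agree hP w (hx w) (hy w) (hz w) with h | h | h
  · exact Or.inl ⟨aux_med_ab h, (aux_med_ab h).trans h⟩
  · exact Or.inr (Or.inl ⟨aux_med_ac h, (aux_med_ac h).trans h⟩)
  · exact Or.inr (Or.inr ⟨aux_med_bc h, (aux_med_bc h).trans h⟩)

lemma aux_median_ultra (hP : IsWallSystem P) {x y z : ↥P → Set S}
    (hx : IsUltra P x) (hy : IsUltra P y) (hz : IsUltra P z) :
    IsUltra P (medianUF P x y z) := by
  constructor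
  · intro w
    rcases aux_median_agree hP hx.1 hy.1 hz.1 w with ⟨h, _⟩ | ⟨h, _⟩ | ⟨h, _⟩ <;> rw [h]
    · exact hx.1 w
    · exact hx.1 w
    · exact hy.1 w
  · intro w₁ w₂ A B hA hB hAB hm
    rcases aux_median_agree hP hx.1 hy.1 hz.1 w₁ with ⟨h1, h2⟩ | ⟨h1, h2⟩ | ⟨h1, h2⟩
    · have e1 : x w₂ = B := hx.2 w₁ w₂ A B hA hB hAB (h1.symm.trans hm)
      have e2 : y w₂ = B := hy.2 w₁ w₂ A B hA hB hAB (h2.symm.trans hm)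
      exact (aux_med_ab (e1.trans e2.symm)).trans e1
    · have e1 : x w₂ = B := hx.2 w₁ w₂ A B hA hB hAB (h1.symm.trans hm)
      have e2 : z w₂ = B := hz.2 w₁ w₂ A B hA hB hAB (h2.symm.trans hm)
      exact (aux_med_ac (e1.trans e2.symm)).trans e1
    · have e1 : y w₂ = B := hy.2 w₁ w₂ A B hA hB hAB (h1.symm.trans hm)
      have e2 : z w₂ = B := hz.2 w₁ w₂ A B hA hB hAB (h2.symm.trans hm)
      exact (aux_med_bc (e1.trans e2.symm)).trans e1

end Aux

/-- The majority-vote median makes `X̂` a median algebra, and the dual space `X_C`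
of any dualisable system is median-convex in `X̂`. -/
theorem median_algebra_and_convexity
    {S : Type*} (P : Set (Set (Set S))) (hP : IsWallSystem P) :
    (∀ x y z : ↥P → Set S, IsUltra P x → IsUltra P y → IsUltra P z →
      IsUltra P (medianUF P x y z)) ∧
    (∀ x y z : ↥P → Set S, IsUltra P x → IsUltra P y → IsUltra P z →
      medianUF P x y z = medianUF P y x z ∧ medianUF P x y z = medianUF P z x y) ∧
    (∀ a b : ↥P → Set S, IsUltra P a → IsUltra P b → medianUF P a a b = a) ∧
    (∀ a b c d e : ↥P → Set S, IsUltra P a → IsUltra P b → IsUltra P c →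
      IsUltra P d → IsUltra P e →
      medianUF P a b (medianUF P c d e)
        = medianUF P (medianUF P a b c) (medianUF P a b d) e) ∧
    (∀ C : Set (Set ↥P), IsDualisable P C →
      ∀ x₁ ∈ dualSpace P C, ∀ x₂ ∈ dualSpace P C, ∀ z : ↥P → Set S, IsUltra P z →
        medianUF P x₁ x₂ z ∈ dualSpace P C) := by
  refine ⟨fun x y z hx hy hz => aux_median_ultra hP hx hy hz, ?_, ?_, ?_, ?_⟩
  · intro x y z _ _ _
    constructor <;>
      · funext w
        simp only [medianUF]
        ext t
        simp only [Set.mem_union, Set.mem_inter_iff]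
        tauto
  · intro a b _ _
    funext w
    simp only [medianUF]
    ext t
    simp only [Set.mem_union, Set.mem_inter_iff]
    tauto
  · intro a b c d e _ _ _ _ _
    funext w
    simp only [medianUF]
    ext t
    simp only [Set.mem_union, Set.mem_inter_iff]
    tauto
  · intro C hC x₁ hx₁ x₂ hx₂ z hz
    refine ⟨aux_median_ultra hP hx₁.1 hx₂.1 hz, ?_⟩
    intro s
    have hd₁ := hx₁.2 s
    have hd₂ := hx₂.2 s
    refine ne_top_of_le_ne_top (WithTop.add_ne_top.2 ⟨hd₁, hd₂⟩) ?_
    rw [wallDist]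
    refine iSup₂_le ?_
    rintro c ⟨hcC, hsep⟩
    classical
    set φ := principalUF P s with hφ
    set c₁ : Set ↥P := {w ∈ c | x₁ w ≠ φ w} with hc₁
    set c₂ : Set ↥P := c \ c₁ with hc₂
    have hsub₁ : c₁ ⊆ c := Set.sep_subset _ _
    have hc₁C : c₁ ∈ C := hC.subset_mem c hcC _ hsub₁
    have hc₂C : c₂ ∈ C := hC.subset_mem c hcC _ Set.diff_subset
    have h₁le : c₁.encard ≤ wallDist P C x₁ φ := by
      rw [wallDist]
      exact le_iSup₂_of_le c₁ ⟨hc₁C, fun w hw => hw.2⟩ le_rfl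
    have h₂le : c₂.encard ≤ wallDist P C x₂ φ := by
      rw [wallDist]
      refine le_iSup₂_of_le c₂ ⟨hc₂C, ?_⟩ le_rfl
      rintro w ⟨hwc, hw1⟩
      have hm := hsep w hwc
      have hx1eq : x₁ w = φ w := by
        by_contra hne
        exact hw1 ⟨hwc, hne⟩
      rcases aux_median_agree hP hx₁.1.1 hx₂.1.1 hz.1 w with ⟨h, _⟩ | ⟨h, _⟩ | ⟨h, _⟩
      · exact absurd (h.trans hx1eq) hm
      · exact absurd (h.trans hx1eq) hm
      · exact fun he => hm (h.trans he)
    calc c.encard = (c₁ ∪ c₂).encard := by rw [Set.union_diff_cancel hsub₁]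
      _ ≤ c₁.encard + c₂.encard := Set.encard_union_le _ _
      _ ≤ _ := add_le_add h₁le h₂le

end WallDuality
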